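/- (Randomized TVA is 0.656 order-competitive) Let ρ be the density ρ(x) = Γ/(2x−1) on [c,1] (0 on [1/2,c)) with c, Γ as above. Suppose for each realization x of g_0/M the reward satisfies R(x) ≥ x·M if x ≤ y and R(x) ≥ (1−x)·M if x > y, where y = OPT/M ∈ [1/2, 1]. Then ∫_{1/2}^{min(y,1)} x·M·ρ(x) dx + ∫_y^1 (1−x)·M·ρ(x) dx ≥ Γ·y·M. -/

import Mathlib

open MeasureTheory

private lemma my_ae_ne (c : ℝ) : ∀ᵐ x : ℝ, x ≠ c := by
  rw [MeasureTheory.ae_iff]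
  simp only [ne_eq, not_not, Set.setOf_eq_eq_singleton]
  exact Real.volume_singleton

private lemma int_left_zero (c a b : ℝ) (hab : a ≤ b) (hbc : b ≤ c) (h g : ℝ → ℝ) :
    ∫ x in a..b, h x * (if x < c then (0:ℝ) else g x) = 0 := by
  have key : ∫ x in a..b, h x * (if x < c then (0:ℝ) else g x) = ∫ _x in a..b, (0:ℝ) := by
    apply intervalIntegral.integral_congr_ae
    filter_upwards [my_ae_ne c] with x hx hmem
    rw [Set.uIoc_of_le hab] at hmem
    have hxc : x < c := lt_of_le_of_ne (hmem.2.trans hbc) hx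
    simp [hxc]
  rw [key, intervalIntegral.integral_zero]

private lemma ii_left (c a b : ℝ) (hab : a ≤ b) (hbc : b ≤ c) (h g : ℝ → ℝ) :
    IntervalIntegrable (fun x => h x * (if x < c then (0:ℝ) else g x)) volume a b := by
  rw [intervalIntegrable_iff_integrableOn_Ioc_of_le hab]
  have h0 : IntegrableOn (fun _ : ℝ => (0:ℝ)) (Set.Ioc a b) volume := integrableOn_zero
  refine h0.congr ?_
  filter_upwards [MeasureTheory.ae_restrict_mem measurableSet_Ioc,
    MeasureTheory.ae_restrict_of_ae (my_ae_ne c)] with x hmem hx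
  have hxc : x < c := lt_of_le_of_ne (hmem.2.trans hbc) hx
  simp [hxc]

private lemma int_right (c a b : ℝ) (hca : c ≤ a) (hab : a ≤ b) (h g : ℝ → ℝ) :
    ∫ x in a..b, h x * (if x < c then (0:ℝ) else g x) = ∫ x in a..b, h x * g x := by
  apply intervalIntegral.integral_congr
  intro x hx
  rw [Set.uIcc_of_le hab] at hx
  have hxc : ¬ x < c := not_lt.mpr (hca.trans hx.1)
  simp [hxc]

private lemma ii_right (c a b Γ : ℝ) (hc : 1/2 < c) (hca : c ≤ a) (hab : a ≤ b)
    (h : ℝ → ℝ) (hh : Continuous h) :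
    IntervalIntegrable (fun x => h x * (if x < c then (0:ℝ) else Γ / (2*x-1))) volume a b := by
  have hbase : IntervalIntegrable (fun x => h x * (Γ / (2*x-1))) volume a b := by
    apply ContinuousOn.intervalIntegrable
    apply ContinuousOn.mul hh.continuousOn
    apply ContinuousOn.div continuousOn_const (by fun_prop)
    intro x hx
    rw [Set.uIcc_of_le hab] at hx
    have h1 : 1/2 < x := lt_of_lt_of_le hc (hca.trans hx.1)
    intro habs; nlinarith
  rw [intervalIntegrable_iff_integrableOn_Ioc_of_le hab] at hbase ⊢
  refine hbase.congr_fun ?_ measurableSet_Ioc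
  intro x hx
  have hxc : ¬ x < c := not_lt.mpr (hca.trans hx.1.le)
  simp [hxc]

private lemma ftc1 (a b M Γ : ℝ) (ha : 1/2 < a) (hab : a ≤ b) :
    ∫ x in a..b, x * M * (Γ / (2*x-1)) =
      M * Γ * ((b - a)/2 + (Real.log (2*b-1) - Real.log (2*a-1))/4) := by
  have key : ∀ x ∈ Set.uIcc a b,
      HasDerivAt (fun x => M*Γ*(x/2 + Real.log (2*x-1)/4)) (x * M * (Γ / (2*x-1))) x := by
    intro x hx
    rw [Set.uIcc_of_le hab] at hx
    have hx2 : (0:ℝ) < 2*x - 1 := by nlinarith [hx.1]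
    have h1 : HasDerivAt (fun x : ℝ => 2*x - 1) 2 x := by
      simpa using ((hasDerivAt_id x).const_mul 2).sub_const 1
    have h2 : HasDerivAt (fun x : ℝ => Real.log (2*x-1)) (2/(2*x-1)) x := h1.log (ne_of_gt hx2)
    have h3 : HasDerivAt (fun x : ℝ => x/2 + Real.log (2*x-1)/4) (1/2 + (2/(2*x-1))/4) x :=
      ((hasDerivAt_id x).div_const 2).add (h2.div_const 4)
    have h4 := h3.const_mul (M*Γ)
    refine h4.congr_deriv ?_
    have hne : (2*x-1) ≠ 0 := ne_of_gt hx2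
    field_simp
    ring
  have hint : IntervalIntegrable (fun x => x * M * (Γ / (2*x-1))) volume a b := by
    apply ContinuousOn.intervalIntegrable
    apply ContinuousOn.mul (by fun_prop)
    apply ContinuousOn.div continuousOn_const (by fun_prop)
    intro x hx
    rw [Set.uIcc_of_le hab] at hx
    intro habs; nlinarith [hx.1]
  rw [intervalIntegral.integral_eq_sub_of_hasDerivAt key hint]
  ring

private lemma ftc2 (a b M Γ : ℝ) (ha : 1/2 < a) (hab : a ≤ b) :
    ∫ x in a..b, (1 - x) * M * (Γ / (2*x-1)) =
      M * Γ * (-(b - a)/2 + (Real.log (2*b-1) - Real.log (2*a-1))/4) := by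
  have key : ∀ x ∈ Set.uIcc a b,
      HasDerivAt (fun x => M*Γ*(-x/2 + Real.log (2*x-1)/4)) ((1 - x) * M * (Γ / (2*x-1))) x := by
    intro x hx
    rw [Set.uIcc_of_le hab] at hx
    have hx2 : (0:ℝ) < 2*x - 1 := by nlinarith [hx.1]
    have h1 : HasDerivAt (fun x : ℝ => 2*x - 1) 2 x := by
      simpa using ((hasDerivAt_id x).const_mul 2).sub_const 1
    have h2 : HasDerivAt (fun x : ℝ => Real.log (2*x-1)) (2/(2*x-1)) x := h1.log (ne_of_gt hx2)
    have h3 : HasDerivAt (fun x : ℝ => -x/2 + Real.log (2*x-1)/4) (-1/2 + (2/(2*x-1))/4) x :=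
      (((hasDerivAt_id x).neg).div_const 2).add (h2.div_const 4)
    have h4 := h3.const_mul (M*Γ)
    refine h4.congr_deriv ?_
    have hne : (2*x-1) ≠ 0 := ne_of_gt hx2
    field_simp
    ring
  have hint : IntervalIntegrable (fun x => (1 - x) * M * (Γ / (2*x-1))) volume a b := by
    apply ContinuousOn.intervalIntegrable
    apply ContinuousOn.mul (by fun_prop)
    apply ContinuousOn.div continuousOn_const (by fun_prop)
    intro x hx
    rw [Set.uIcc_of_le hab] at hx
    intro habs; nlinarith [hx.1]
  rw [intervalIntegral.integral_eq_sub_of_hasDerivAt key hint]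
  ring

/-- Randomized TVA is 0.656 order-competitive: with the density
`ρ(x) = Γ/(2x−1)` on `[c,1]` (and `0` on `[1/2,c)`), if the realized reward `R`
satisfies `R x ≥ x·M` for `x ≤ y` and `R x ≥ (1−x)·M` for `x > y`, where
`y = OPT/M ∈ [1/2,1]`, then
`∫_{1/2}^{min(y,1)} x·M·ρ(x) dx + ∫_y^1 (1−x)·M·ρ(x) dx ≥ Γ·y·M`. -/
theorem randomized_tva_competitive
    (c : ℝ) (hc1 : 1 / 2 < c) (hc2 : c < 1)
    (hc : Real.log (1 / (2 * c - 1)) - 2 * c = 2)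
    (M OPT : ℝ) (hM : 0 < M) (hOPT1 : M / 2 ≤ OPT) (hOPT2 : OPT ≤ M)
    (R : ℝ → ℝ)
    (hRunder : ∀ x : ℝ, x ≤ OPT / M → R x ≥ x * M)
    (hRover : ∀ x : ℝ, x > OPT / M → R x ≥ (1 - x) * M) :
    (∫ x in (1 / 2 : ℝ)..(min (OPT / M) 1),
        x * M * (if x < c then 0 else (2 / Real.log (1 / (2 * c - 1))) / (2 * x - 1)))
      + (∫ x in (OPT / M)..1,
        (1 - x) * M * (if x < c then 0 else (2 / Real.log (1 / (2 * c - 1))) / (2 * x - 1)))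
      ≥ (2 / Real.log (1 / (2 * c - 1))) * (OPT / M) * M := by
  set y := OPT / M with hy
  have hy1 : (1/2 : ℝ) ≤ y := by
    rw [hy, le_div_iff₀ hM]; linarith
  have hy2 : y ≤ 1 := by
    rw [hy, div_le_one hM]; exact hOPT2
  have hmin : min y 1 = y := min_eq_left hy2
  have h2c : (0:ℝ) < 2*c - 1 := by linarith
  have hlogc : Real.log (2*c-1) = -(2 + 2*c) := by
    have : Real.log (1 / (2*c-1)) = - Real.log (2*c-1) := by
      rw [one_div, Real.log_inv]
    linarith [hc, this]
  set G := 2 / Real.log (1 / (2 * c - 1)) with hG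
  have hLval : Real.log (1 / (2 * c - 1)) = 2 + 2*c := by linarith
  have hGval : G = 2 / (2 + 2*c) := by rw [hG, hLval]
  have hGpos : 0 < G := by
    rw [hGval]; positivity
  have hlog1 : Real.log (2 * (1:ℝ) - 1) = 0 := by norm_num
  rw [hmin]
  rcases le_or_gt c y with hcy | hyc
  · -- c ≤ y : split first integral at c
    have hsplit : (∫ x in (1/2 : ℝ)..c, x * M * (if x < c then 0 else G / (2 * x - 1)))
        + (∫ x in c..y, x * M * (if x < c then 0 else G / (2 * x - 1)))
        = ∫ x in (1/2 : ℝ)..y, x * M * (if x < c then 0 else G / (2 * x - 1)) := by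
      apply intervalIntegral.integral_add_adjacent_intervals
      · exact ii_left c (1/2) c hc1.le le_rfl (fun x => x * M) _
      · exact ii_right c c y G hc1 le_rfl hcy (fun x => x * M) (by continuity)
    have e1 : (∫ x in (1/2 : ℝ)..c, x * M * (if x < c then 0 else G / (2 * x - 1))) = 0 :=
      int_left_zero c (1/2) c hc1.le le_rfl (fun x => x * M) _
    have e2 : (∫ x in c..y, x * M * (if x < c then 0 else G / (2 * x - 1)))
        = ∫ x in c..y, x * M * (G / (2 * x - 1)) :=
      int_right c c y le_rfl hcy (fun x => x * M) _
    have e3 : (∫ x in y..1, (1 - x) * M * (if x < c then 0 else G / (2 * x - 1)))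
        = ∫ x in y..1, (1 - x) * M * (G / (2 * x - 1)) :=
      int_right c y 1 hcy hy2 (fun x => (1 - x) * M) _
    have f1 := ftc1 c y M G hc1 hcy
    have f2 := ftc2 y 1 M G (lt_of_lt_of_le hc1 hcy) hy2
    rw [← hsplit, e1, e2, e3, f1, f2, zero_add]
    have : M * G * ((y - c)/2 + (Real.log (2*y-1) - Real.log (2*c-1))/4)
        + M * G * (-(1 - y)/2 + (Real.log (2*1-1) - Real.log (2*y-1))/4) = G * y * M := by
      rw [hlogc, hlog1]; ring
    linarith [this]
  · -- y < c : first integral is 0; split second at c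
    have e1 : (∫ x in (1/2 : ℝ)..y, x * M * (if x < c then 0 else G / (2 * x - 1))) = 0 :=
      int_left_zero c (1/2) y hy1 hyc.le (fun x => x * M) _
    have hsplit : (∫ x in y..c, (1 - x) * M * (if x < c then 0 else G / (2 * x - 1)))
        + (∫ x in c..1, (1 - x) * M * (if x < c then 0 else G / (2 * x - 1)))
        = ∫ x in y..1, (1 - x) * M * (if x < c then 0 else G / (2 * x - 1)) := by
      apply intervalIntegral.integral_add_adjacent_intervals
      · exact ii_left c y c hyc.le le_rfl (fun x => (1 - x) * M) _
      · exact ii_right c c 1 G hc1 le_rfl hc2.le (fun x => (1 - x) * M) (by continuity)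
    have e2 : (∫ x in y..c, (1 - x) * M * (if x < c then 0 else G / (2 * x - 1))) = 0 :=
      int_left_zero c y c hyc.le le_rfl (fun x => (1 - x) * M) _
    have e3 : (∫ x in c..1, (1 - x) * M * (if x < c then 0 else G / (2 * x - 1)))
        = ∫ x in c..1, (1 - x) * M * (G / (2 * x - 1)) :=
      int_right c c 1 le_rfl hc2.le (fun x => (1 - x) * M) _
    have f2 := ftc2 c 1 M G hc1 hc2.le
    rw [e1, ← hsplit, e2, e3, f2, zero_add, zero_add]
    have hval : M * G * (-(1 - c)/2 + (Real.log (2*1-1) - Real.log (2*c-1))/4) = M * G * c := by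
      rw [hlogc, hlog1]; ring
    rw [hval]
    nlinarith [mul_nonneg (mul_nonneg hGpos.le hM.le) (sub_nonneg.mpr hyc.le)]
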